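/- arXiv:2203.07758 — 2 statements merged into one kernel-verified Lean document; each statement's English description precedes it below -/
import Mathlib

section
/- For every n < ω, if ξ ∈ X and ξ < Θ_X(Ω_n), then there exists ζ < Ω_n such that ξ = Θ_X(ζ). -/
open Ordinal Set

noncomputable section
open scoped Classical

/-- `Ω`, the first uncountable ordinal. -/
def OmegaO : Ordinal := (Cardinal.aleph 1).ord

/-- `ε_{Ω+1}`, the least `ε > Ω` with `ω ^ ε = ε`. -/
def epsOmega : Ordinal := nfp (fun a => Ordinal.omega0 ^ a) (OmegaO + 1)

lemma omega0_le_OmegaO : Ordinal.omega0 ≤ OmegaO := by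
  rw [OmegaO, ← Cardinal.ord_aleph0]
  exact Cardinal.ord_le_ord.2 (Cardinal.aleph0_le_aleph 1)

lemma one_lt_OmegaO : 1 < OmegaO :=
  lt_of_lt_of_le Ordinal.one_lt_omega0 omega0_le_OmegaO

lemma OmegaO_pos : 0 < OmegaO := lt_trans zero_lt_one one_lt_OmegaO

/-- `ξ*`, the maximal coefficient in the `Ω`-normal form of `ξ`. -/
def star (ξ : Ordinal) : Ordinal :=
  if h0 : ξ = 0 then 0
  else if hl : log OmegaO ξ < ξ then
    max (max (star (log OmegaO ξ)) (star (ξ % OmegaO ^ log OmegaO ξ)))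
      (ξ / OmegaO ^ log OmegaO ξ)
  else 0
termination_by ξ
decreasing_by
  · exact hl
  · exact mod_opow_log_lt_self _ h0

/-- The generalized fundamental sequence `ξ[θ]`. -/
def fs (ξ θ : Ordinal) : Ordinal :=
  if h0 : ξ ≤ 1 then 0
  else if hmod : ξ % OmegaO ^ log OmegaO ξ ≠ 0 then
    OmegaO ^ log OmegaO ξ * (ξ / OmegaO ^ log OmegaO ξ) + fs (ξ % OmegaO ^ log OmegaO ξ) θ
  else if Order.IsSuccLimit (ξ / OmegaO ^ log OmegaO ξ) then OmegaO ^ log OmegaO ξ * θ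
  else if hβ : ξ / OmegaO ^ log OmegaO ξ = 1 then
    (if hlog : Order.IsSuccLimit (log OmegaO ξ) then
       (if hll : log OmegaO ξ < ξ then OmegaO ^ fs (log OmegaO ξ) θ else 0)
     else OmegaO ^ Ordinal.pred (log OmegaO ξ) * θ)
  else
    OmegaO ^ log OmegaO ξ * Ordinal.pred (ξ / OmegaO ^ log OmegaO ξ) + fs (OmegaO ^ log OmegaO ξ) θ
termination_by ξ
decreasing_by
  · exact mod_opow_log_lt_self _ (by intro h; exact h0 (by simp [h]))
  · exact hll
  · -- `Ω ^ log Ω ξ < ξ`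
    have hξ0 : ξ ≠ 0 := by intro h; exact h0 (by simp [h])
    have hle : OmegaO ^ log OmegaO ξ ≤ ξ := opow_log_le_self _ hξ0
    have hpos : 0 < OmegaO ^ log OmegaO ξ :=
      opow_pos _ OmegaO_pos
    have hβ0 : 0 < ξ / OmegaO ^ log OmegaO ξ :=
      Ordinal.div_pos (by positivity) |>.2 hle
    have hβ1 : 1 < ξ / OmegaO ^ log OmegaO ξ :=
      lt_of_le_of_ne (Order.one_le_iff_ne_zero.2 hβ0.ne') (Ne.symm hβ)
    calc OmegaO ^ log OmegaO ξ = OmegaO ^ log OmegaO ξ * 1 := (mul_one _).symm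
      _ < OmegaO ^ log OmegaO ξ * (ξ / OmegaO ^ log OmegaO ξ) := by
          exact mul_lt_mul_of_pos_left hβ1 hpos
      _ ≤ ξ := Ordinal.mul_div_le _ _

/-- The terminal part `τ(ξ)`. -/
def tau (ξ : Ordinal) : Ordinal :=
  if h0 : ξ = 0 then 0
  else if hmod : ξ % OmegaO ^ log OmegaO ξ ≠ 0 then tau (ξ % OmegaO ^ log OmegaO ξ)
  else if Order.IsSuccLimit (ξ / OmegaO ^ log OmegaO ξ) then ξ / OmegaO ^ log OmegaO ξ
  else if log OmegaO ξ = 0 then 1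
  else if hlog : Order.IsSuccLimit (log OmegaO ξ) then
    (if hll : log OmegaO ξ < ξ then tau (log OmegaO ξ) else 0)
  else OmegaO
termination_by ξ
decreasing_by
  · exact mod_opow_log_lt_self _ h0
  · exact hll

/-- The collapsing function `Θ_X`. -/
def ThetaF (X : Set Ordinal) (ξ : Ordinal) : Ordinal :=
  sInf {θ | θ ∈ X ∧ star ξ < θ ∧ ∀ ζ, ζ < ξ → star ζ < θ → ThetaF X ζ < θ}
termination_by ξ
decreasing_by exact by assumption

/-- `Ω_n`: the tower `Ω_0 = 1`, `Ω_{n+1} = Ω ^ Ω_n`. -/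
def OmegaTow : ℕ → Ordinal
  | 0 => 1
  | n + 1 => OmegaO ^ OmegaTow n

/-- `Θ_X(ε_{Ω+1}) = sup_n Θ_X(Ω_n)`. -/
def ThetaEps (X : Set Ordinal) : Ordinal := ⨆ n : ℕ, ThetaF X (OmegaTow n)

/-- `ε̂_{Ω+1}`. -/
def hatEps (X : Set Ordinal) : Set Ordinal :=
  {ξ | ξ < epsOmega ∧ star ξ < ThetaEps X}

/-- `X` is a club in `Ω`. -/
def IsClubBelowOmega (X : Set Ordinal) : Prop :=
  (∀ x ∈ X, x < OmegaO) ∧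
  (∀ a, a < OmegaO → ∃ x ∈ X, a < x) ∧
  (∀ S : Set Ordinal, S ⊆ X → S.Nonempty → sSup S < OmegaO → sSup S ∈ X)

/-- The set of limit points of `X` (below `Ω`). -/
def limitPtsOf (X : Set Ordinal) : Set Ordinal :=
  {x | 0 < x ∧ ∀ y, y < x → ∃ z ∈ X, y < z ∧ z < x}

/-- `FIX(X)`. -/
def FIXs (X : Set Ordinal) : Set Ordinal :=
  {ξ | ξ < epsOmega ∧ star (fs ξ 1) < star ξ ∧ star ξ = tau ξ ∧
    ∃ γ, ξ < γ ∧ γ < epsOmega ∧ star ξ = ThetaF X γ}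

/-- `JUMP(X)`. -/
def JUMPs (X : Set Ordinal) : Set Ordinal :=
  {0} ∪ {ξ | ∃ ζ, ξ = ζ + 1} ∪ FIXs X

/-- `Θ*`. -/
def ThetaStarF (X : Set Ordinal) (ξ : Ordinal) : Ordinal :=
  if ∃ ζ, ξ = ζ + 1 then ThetaF X (Ordinal.pred ξ)
  else if ξ ∈ FIXs X then tau ξ
  else 0

/-- `ξ̌`. -/
def checkF (X : Set Ordinal) (ξ : Ordinal) : Ordinal :=
  if 0 < ThetaStarF X ξ then OmegaO * (ξ / OmegaO) else ξ

/-- `ℙ`, the club of countable additively indecomposable ordinals. -/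
def PP : Set Ordinal := {x | x < OmegaO ∧ ∃ a, x = Ordinal.omega0 ^ a}

/-- `1 + Ord`, the club of nonzero countable ordinals. -/
def oneOrdS : Set Ordinal := {x | 0 < x ∧ x < OmegaO}

/-- `Θ^{(i)}(ξ)`. -/
def ThetaIter (X : Set Ordinal) (ξ : Ordinal) : ℕ → Ordinal
  | 0 => ThetaStarF X ξ
  | n + 1 => ThetaF X (fs (checkF X ξ) (ThetaIter X ξ n))

/-- A Buchholz system of fundamental sequences for `Θ_X`. -/
def IsBuchholz (X : Set Ordinal) (B : Ordinal → ℕ → Ordinal) : Prop :=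
  (∀ n, B 0 n = 0) ∧
  (∀ α ξ n, ξ ∈ hatEps X → OmegaO ≤ ξ → tau ξ < OmegaO → ξ = fs α (tau ξ) →
    B ξ n = fs α (B (tau ξ) n)) ∧
  (∀ ξ n, ξ ∈ hatEps X → 0 < tau (checkF X ξ) → tau (checkF X ξ) < OmegaO →
    B (ThetaF X ξ) n = ThetaF X (B (checkF X ξ) n + ThetaStarF X ξ)) ∧
  (∀ ξ n, ξ ∈ hatEps X → tau (checkF X ξ) = OmegaO →
    B (ThetaF X ξ) n = ThetaIter X ξ n)

/-- The additional clause for the `σ = Θ_{1+Ord}` Buchholz system. -/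
def SigmaExtra (B : Ordinal → ℕ → Ordinal) : Prop :=
  ∀ β n, β < OmegaO → B (ThetaF oneOrdS β) n = β

/-- The additional clauses for the `ϑ = Θ_ℙ` Buchholz system. -/
def VarthetaExtra (B : Ordinal → ℕ → Ordinal) : Prop :=
  (∀ α β n, 0 < β → (∀ α' < α, α' + β < α + β) → B (α + β) n = α + B β n) ∧
  (∀ β n, β < OmegaO → β ∈ JUMPs PP → B (ThetaF PP β) n = ThetaStarF PP β * n)




lemma myStarZero : _root_.star 0 = 0 := by rw [_root_.star]; simp

lemma star_opow_of_lt {a : Ordinal} (ha : a < OmegaO ^ a) :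
    _root_.star (OmegaO ^ a) = max (_root_.star a) 1 := by
  have h0 : OmegaO ^ a ≠ 0 := (opow_pos a OmegaO_pos).ne'
  rw [_root_.star]
  rw [dif_neg h0, log_opow one_lt_OmegaO, dif_pos ha, Ordinal.mod_self,
    Ordinal.div_self h0, myStarZero]
  simp

lemma OmegaTow_lt_opow (n : ℕ) : OmegaTow n < OmegaO ^ OmegaTow n := by
  induction n with
  | zero => simpa [OmegaTow] using one_lt_OmegaO
  | succ n ih =>
    have : OmegaO ^ OmegaTow n < OmegaO ^ OmegaO ^ OmegaTow n :=
      (opow_lt_opow_iff_right one_lt_OmegaO).2 ih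
    simpa [OmegaTow] using this

lemma star_OmegaTow (n : ℕ) : _root_.star (OmegaTow n) = 1 := by
  induction n with
  | zero =>
    show _root_.star 1 = 1
    have h1 : (1 : Ordinal) = OmegaO ^ (0 : Ordinal) := by simp
    rw [h1, star_opow_of_lt (by simpa using OmegaO_pos), myStarZero]
    simp
  | succ n ih =>
    show _root_.star (OmegaO ^ OmegaTow n) = 1
    rw [star_opow_of_lt (OmegaTow_lt_opow n), ih]
    simp

/-- every element of `X` below `Θ_X(Ω_n)` is of the form `Θ_X(ζ)` with `ζ < Ω_n`. -/
theorem stmt5 (X : Set Ordinal) (hX : IsClubBelowOmega X) (h0X : 0 ∉ X)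
    (n : ℕ) (ξ : Ordinal) (h1 : ξ ∈ X) (h2 : ξ < ThetaF X (OmegaTow n)) :
    ∃ ζ, ζ < OmegaTow n ∧ ξ = ThetaF X ζ := by
  have hξ0 : ξ ≠ 0 := fun h => h0X (h ▸ h1)
  set S : Set Ordinal := {η | star η < ξ ∧ ξ ≤ ThetaF X η} with hS
  obtain ⟨w, hwS, hwle⟩ : ∃ w, w ∈ S ∧ w ≤ OmegaTow n := by
    rcases lt_or_ge 1 ξ with h | h
    · exact ⟨OmegaTow n, ⟨by rw [_root_.star_OmegaTow]; exact h, h2.le⟩, le_rfl⟩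
    · have hξ1 : ξ = 1 := le_antisymm h (Ordinal.one_le_iff_ne_zero.2 hξ0)
      refine ⟨0, ⟨by rw [myStarZero, hξ1]; exact zero_lt_one, ?_⟩, zero_le (a := _)⟩
      rw [hξ1, ThetaF]
      refine le_csInf ⟨1, hξ1 ▸ h1, by rw [myStarZero]; exact zero_lt_one,
        fun ζ hζ => absurd hζ (not_lt_zero (a := ζ))⟩ ?_
      intro b hb
      have := hb.2.1
      rw [myStarZero] at this
      exact Order.one_le_iff_pos.2 this
  set ζ := sInf S with hζ
  have hζS : ζ ∈ S := csInf_mem ⟨w, hwS⟩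
  have hle : ThetaF X ζ ≤ ξ := by
    by_contra hlt
    push_neg at hlt
    have : ThetaF X ζ ≤ ξ := by
      rw [ThetaF]
      refine csInf_le' ⟨h1, hζS.1, fun η hη hstar => ?_⟩
      by_contra hc
      push_neg at hc
      have hmem : η ∈ S := ⟨hstar, hc⟩
      exact absurd (csInf_le' hmem) (not_le.2 hη)
    exact absurd this (not_le.2 hlt)
  have heq : ξ = ThetaF X ζ := le_antisymm hζS.2 hle
  refine ⟨ζ, ?_, heq⟩
  have hζle : ζ ≤ OmegaTow n := (csInf_le' hwS).trans hwle
  refine lt_of_le_of_ne hζle fun hc => ?_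
  rw [heq, hc] at h2
  exact lt_irrefl _ h2

end
end

section
/- If ξ ∈ X and ξ < Θ_X(ε_{Ω+1}), then there exists ζ < ε_{Ω+1} such that Θ_X(ζ) = ξ. -/
open Ordinal Set

noncomputable section
open scoped Classical

lemma starZeroAux : star (0 : Ordinal) = 0 := by rw [star.eq_def]; simp

lemma starOneAux : star (1 : Ordinal) = 1 := by
  rw [star.eq_def]
  simp [Ordinal.log_one_right, starZeroAux, zero_lt_one]

lemma towLtSuccAux : ∀ n, OmegaTow n < OmegaTow (n + 1)
  | 0 => by simpa [OmegaTow, opow_one] using one_lt_OmegaO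
  | n + 1 => by
    have ih := towLtSuccAux n
    show OmegaO ^ OmegaTow n < OmegaO ^ OmegaTow (n + 1)
    exact (opow_lt_opow_iff_right one_lt_OmegaO).2 ih

lemma starTowAux : ∀ n, star (OmegaTow n) = 1
  | 0 => starOneAux
  | n + 1 => by
    have ih := starTowAux n
    have h0 : OmegaO ^ OmegaTow n ≠ 0 := (opow_pos _ OmegaO_pos).ne'
    have hlog : log OmegaO (OmegaO ^ OmegaTow n) = OmegaTow n :=
      log_opow one_lt_OmegaO _
    show star (OmegaO ^ OmegaTow n) = 1
    rw [star.eq_def]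
    rw [dif_neg h0]
    have hcond : log OmegaO (OmegaO ^ OmegaTow n) < OmegaO ^ OmegaTow n := by
      rw [hlog]; exact towLtSuccAux n
    rw [dif_pos hcond, hlog, Ordinal.mod_self, Ordinal.div_self h0, starZeroAux, ih]
    simp

lemma epsFixAux : Ordinal.omega0 ^ epsOmega = epsOmega :=
  Ordinal.nfp_fp (isNormal_opow one_lt_omega0) _

lemma OmegaLtEpsAux : OmegaO < epsOmega :=
  lt_of_lt_of_le (lt_add_one _) (le_nfp _ _)

lemma towLtEpsAux : ∀ n, OmegaTow n < epsOmega
  | 0 => lt_trans one_lt_OmegaO OmegaLtEpsAux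
  | n + 1 => by
    have ih := towLtEpsAux n
    have hmul : Principal (· * ·) epsOmega := by
      have h := principal_mul_omega0_opow_opow epsOmega
      rwa [epsFixAux, epsFixAux] at h
    have h1 : OmegaO ^ OmegaTow n ≤ Ordinal.omega0 ^ (OmegaO * OmegaTow n) := by
      rw [opow_mul]
      exact opow_le_opow_left _ (right_le_opow _ one_lt_omega0)
    have h2 : Ordinal.omega0 ^ (OmegaO * OmegaTow n) < Ordinal.omega0 ^ epsOmega :=
      (opow_lt_opow_iff_right one_lt_omega0).2 (hmul OmegaLtEpsAux ih)
    calc OmegaTow (n + 1) = OmegaO ^ OmegaTow n := rfl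
      _ ≤ Ordinal.omega0 ^ (OmegaO * OmegaTow n) := h1
      _ < Ordinal.omega0 ^ epsOmega := h2
      _ = epsOmega := epsFixAux


/-- every element of `X` below `Θ_X(ε_{Ω+1})` is in the range of `Θ_X`. -/
theorem stmt6 (X : Set Ordinal) (hX : IsClubBelowOmega X) (h0X : 0 ∉ X)
    (ξ : Ordinal) (h1 : ξ ∈ X) (h2 : ξ < ThetaEps X) :
    ∃ ζ, ζ < epsOmega ∧ ThetaF X ζ = ξ := by
  rw [ThetaEps] at h2
  obtain ⟨n, hn⟩ := Ordinal.lt_iSup_iff.mp h2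
  have hξ0 : ξ ≠ 0 := fun h => h0X (h ▸ h1)
  have hξpos : 0 < ξ := pos_iff_ne_zero.2 hξ0
  have hzmem : ξ ∈ {θ | θ ∈ X ∧ star (0 : Ordinal) < θ ∧
      ∀ ζ : Ordinal, ζ < 0 → star ζ < θ → ThetaF X ζ < θ} :=
    ⟨h1, by simpa [starZeroAux] using hξpos,
      fun ζ hζ => absurd hζ (by simp : ¬ ζ < 0)⟩
  have h0le : ThetaF X 0 ≤ ξ := by rw [ThetaF]; exact csInf_le' hzmem
  rcases eq_or_lt_of_le h0le with heq | hlt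
  · exact ⟨0, lt_trans OmegaO_pos OmegaLtEpsAux, heq⟩
  · have hT0mem : ThetaF X 0 ∈ {θ | θ ∈ X ∧ star (0 : Ordinal) < θ ∧
        ∀ ζ : Ordinal, ζ < 0 → star ζ < θ → ThetaF X ζ < θ} := by
      rw [ThetaF]; exact csInf_mem ⟨ξ, hzmem⟩
    have h1lt : 1 < ξ := by
      have hp : 0 < ThetaF X 0 := by
        have := hT0mem.2.1; rwa [starZeroAux] at this
      exact lt_of_le_of_lt (Order.one_le_iff_pos.2 hp) hlt
    have hTne : OmegaTow n ∈ {ζ : Ordinal | star ζ < ξ ∧ ξ ≤ ThetaF X ζ} :=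
      ⟨(starTowAux n).symm ▸ h1lt, le_of_lt hn⟩
    set T : Set Ordinal := {ζ : Ordinal | star ζ < ξ ∧ ξ ≤ ThetaF X ζ} with hTdef
    have hζ₀ : sInf T ∈ T := csInf_mem ⟨_, hTne⟩
    have hmem : ξ ∈ {θ | θ ∈ X ∧ star (sInf T) < θ ∧
        ∀ ζ, ζ < sInf T → star ζ < θ → ThetaF X ζ < θ} := by
      refine ⟨h1, hζ₀.1, fun ζ hζ hst => ?_⟩
      by_contra h
      push_neg at h
      exact absurd (csInf_le' (show ζ ∈ T from ⟨hst, h⟩)) (not_le.2 hζ)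
    have hle : ThetaF X (sInf T) ≤ ξ := by rw [ThetaF]; exact csInf_le' hmem
    exact ⟨sInf T, lt_of_le_of_lt (csInf_le' hTne) (towLtEpsAux n),
      le_antisymm hle hζ₀.2⟩


end
end
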